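/- Let κ > 1, γ ∈ ℝ, let W : EuclideanSpace ℝ (Fin d) →L[ℝ] EuclideanSpace ℝ (Fin d) be skew-adjoint, and let y : ℝ → EuclideanSpace ℝ (Fin d) be differentiable with y'(t) = −y(t) + γ • W (y(t)) + (−κ(‖y(t)‖² − 1)) • y(t) for all t ≥ 0. If ‖y(0)‖² = (κ − 1)/κ, then ‖y(t)‖² = (κ − 1)/κ for all t ≥ 0; that is, the sphere of squared radius (κ − 1)/κ is invariant, forming a ring-like attracting manifold. -/

import Mathlib

open scoped RealInnerProductSpace

theorem stmt_12 (d : ℕ) (κ γ : ℝ) (hκ : 1 < κ)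
    (W : EuclideanSpace ℝ (Fin d) →L[ℝ] EuclideanSpace ℝ (Fin d))
    (hW : ∀ z z', ⟪W z, z'⟫ = -⟪z, W z'⟫)
    (y : ℝ → EuclideanSpace ℝ (Fin d)) (hy : Differentiable ℝ y)
    (hode : ∀ t ≥ (0:ℝ), deriv y t =
      -y t + γ • W (y t) + (-(κ * (‖y t‖ ^ 2 - 1))) • y t)
    (hinit : ‖y 0‖ ^ 2 = (κ - 1) / κ) :
    ∀ t ≥ (0:ℝ), ‖y t‖ ^ 2 = (κ - 1) / κ := by
  set c : ℝ := (κ - 1) / κ with hc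
  set u : ℝ → ℝ := fun t => ‖y t‖ ^ 2 with hu
  -- u is differentiable with explicit derivative
  have hudiff : ∀ t, HasDerivAt u (2 * ⟪y t, deriv y t⟫) t := by
    intro t
    have h1 : HasDerivAt y (deriv y t) t := (hy t).hasDerivAt
    have h2 := h1.inner ℝ h1
    have : (fun t => ⟪y t, y t⟫) = u := by
      funext s; exact real_inner_self_eq_norm_sq _
    rw [this] at h2
    exact h2.congr_deriv (by rw [real_inner_comm (y t) (deriv y t)]; ring)
  have huW : ∀ z : EuclideanSpace ℝ (Fin d), ⟪z, W z⟫ = 0 := by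
    intro z
    have := hW z z
    have h2 : ⟪W z, z⟫ = ⟪z, W z⟫ := real_inner_comm _ _
    linarith
  -- derivative of u for t ≥ 0
  have hukey : ∀ t ≥ (0:ℝ), HasDerivAt u (-2 * κ * u t * (u t - c)) t := by
    intro t ht
    have h := hudiff t
    convert h using 1
    rw [hode t ht]
    rw [inner_add_right, inner_add_right, inner_smul_right, inner_smul_right,
      inner_neg_right, huW, real_inner_self_eq_norm_sq]
    have hκ0 : κ ≠ 0 := by linarith
    simp only [hu, hc]
    field_simp
    ring
  -- the auxiliary function F
  have hucont : Continuous u := by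
    have : Continuous y := hy.continuous
    fun_prop
  set A : ℝ → ℝ := fun t => ∫ s in (0:ℝ)..t, 2 * κ * u s with hA
  set F : ℝ → ℝ := fun t => (u t - c) * Real.exp (A t) with hF
  have hAderiv : ∀ t, HasDerivAt A (2 * κ * u t) t := by
    intro t
    exact (Continuous.integral_hasStrictDerivAt (by fun_prop) 0 t).hasDerivAt
  have hFderiv : ∀ t ≥ (0:ℝ), HasDerivAt F 0 t := by
    intro t ht
    have h1 := ((hukey t ht).sub_const c).mul (((hAderiv t).exp))
    exact h1.congr_deriv (by ring)
  intro t ht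
  have hF0 : F 0 = 0 := by
    simp [hF, hu, hinit, hc, A]
  have hFt : F t = F 0 := by
    rcases eq_or_lt_of_le ht with h | h
    · rw [← h]
    · have := constant_of_has_deriv_right_zero (f := F) (a := 0) (b := t)
        (fun x hx => ((hFderiv x (by simpa using hx.1)).continuousAt.continuousWithinAt))
        ?_ t ?_
      · exact this
      · intro x hx
        exact (hFderiv x hx.1).hasDerivWithinAt
      · exact ⟨ht, le_refl t⟩
  have hexp : Real.exp (A t) ≠ 0 := Real.exp_ne_zero _
  have : (u t - c) * Real.exp (A t) = 0 := by rw [← hF0]; exact hFt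
  have : u t - c = 0 := by
    rcases mul_eq_zero.mp this with h | h
    · exact h
    · exact absurd h hexp
  have : u t = c := by linarith
  simpa [hu, hc] using this
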